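/- Let S be a Hermitian complex matrix and σ a PSD complex matrix, both indexed by the same nonempty finite type. Then ‖σ^{1/2} · S · σ^{1/2}‖₁ ≤ √( tr(S²) · tr(σ²) ), where σ^{1/2} denotes the unique PSD square root of σ, ‖M‖₁ is the trace norm of the Hermitian matrix M (the sum of the absolute values of its eigenvalues), and tr(S²), tr(σ²) are real and nonnegative. -/

import Mathlib

open Matrix
open scoped Classical ComplexOrder

/-- Trace norm of a Hermitian complex matrix: the sum of the absolute values of
its eigenvalues. -/
noncomputable def traceNorm {n : Type*} [Fintype n] [DecidableEq n] (M : Matrix n n ℂ) : ℝ :=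
  if h : M.IsHermitian then ∑ i, |h.eigenvalues i| else 0

/-- The PSD square root, as `Matrix.PosSemidef.sqrt` was defined in Mathlib (Dec 2024). -/
noncomputable def Matrix.PosSemidef.sqrt {n : Type*} [Fintype n] [DecidableEq n] {A : Matrix n n ℂ}
    (hA : A.PosSemidef) : Matrix n n ℂ :=
  (hA.1.eigenvectorUnitary : Matrix n n ℂ) * diagonal ((↑) ∘ Real.sqrt ∘ hA.1.eigenvalues) *
    (star hA.1.eigenvectorUnitary : Matrix n n ℂ)

lemma Matrix.PosSemidef.posSemidef_sqrt {n : Type*} [Fintype n] [DecidableEq n]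
    {A : Matrix n n ℂ} (hA : A.PosSemidef) : hA.sqrt.PosSemidef := by
  unfold Matrix.PosSemidef.sqrt
  have hD : (diagonal (((↑) : ℝ → ℂ) ∘ Real.sqrt ∘ hA.1.eigenvalues)).PosSemidef :=
    posSemidef_diagonal_iff.mpr fun i => by
      simp only [Function.comp_apply]
      exact Complex.zero_le_real.mpr (Real.sqrt_nonneg _)
  exact hD.mul_mul_conjTranspose_same (hA.1.eigenvectorUnitary : Matrix n n ℂ)

lemma Matrix.PosSemidef.sqrt_mul_self {n : Type*} [Fintype n] [DecidableEq n]
    {A : Matrix n n ℂ} (hA : A.PosSemidef) : hA.sqrt * hA.sqrt = A := by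
  unfold Matrix.PosSemidef.sqrt
  have hu : (star hA.1.eigenvectorUnitary : Matrix n n ℂ) * (hA.1.eigenvectorUnitary : Matrix n n ℂ)
      = 1 := Matrix.mem_unitaryGroup_iff'.mp hA.1.eigenvectorUnitary.2
  have hs := hA.1.spectral_theorem
  rw [Unitary.conjStarAlgAut_apply] at hs
  conv_rhs => rw [hs]
  simp only [mul_assoc]
  rw [← mul_assoc (star hA.1.eigenvectorUnitary : Matrix n n ℂ) _ _, hu, one_mul,
    ← mul_assoc (diagonal _) (diagonal _), diagonal_mul_diagonal]
  congr 3
  funext i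
  simp only [Function.comp_apply]
  rw [← Complex.ofReal_mul, Real.mul_self_sqrt (hA.eigenvalues_nonneg i)]
  rfl

section aux

variable {n : Type*} [Fintype n] [DecidableEq n]

lemma trace_conjTranspose_mul_re (A : Matrix n n ℂ) :
    (Aᴴ * A).trace.re = ∑ p : n × n, ‖A p.1 p.2‖ ^ 2 := by
  have h : (Aᴴ * A).trace.re = ∑ i, ∑ j, ‖A j i‖ ^ 2 := by
    rw [Matrix.trace, Complex.re_sum]
    refine Finset.sum_congr rfl fun i _ => ?_
    rw [Matrix.diag_apply, Matrix.mul_apply, Complex.re_sum]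
    refine Finset.sum_congr rfl fun j _ => ?_
    rw [Matrix.conjTranspose_apply]
    simp [Complex.star_def, mul_comm, Complex.mul_conj, Complex.normSq_eq_norm_sq,
      ← Complex.ofReal_pow]
  rw [h, Fintype.sum_prod_type]
  exact Finset.sum_comm

lemma cs_trace (A B : Matrix n n ℂ) :
    ‖(Aᴴ * B).trace‖ ≤ Real.sqrt ((Aᴴ * A).trace.re) * Real.sqrt ((Bᴴ * B).trace.re) := by
  have h1 : ‖(Aᴴ * B).trace‖ ≤ ∑ p : n × n, ‖A p.1 p.2‖ * ‖B p.1 p.2‖ := by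
    rw [Matrix.trace]
    calc ‖∑ i, (Aᴴ * B).diag i‖ ≤ ∑ i, ‖(Aᴴ * B).diag i‖ := norm_sum_le _ _
    _ ≤ ∑ i, ∑ j, ‖A j i‖ * ‖B j i‖ := by
        refine Finset.sum_le_sum fun i _ => ?_
        rw [Matrix.diag_apply, Matrix.mul_apply]
        refine (norm_sum_le _ _).trans ?_
        refine Finset.sum_le_sum fun j _ => ?_
        simp [Matrix.conjTranspose_apply, norm_mul]
    _ = ∑ p : n × n, ‖A p.1 p.2‖ * ‖B p.1 p.2‖ := by
        rw [Fintype.sum_prod_type]; exact Finset.sum_comm.symm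
  refine h1.trans ?_
  have h2 := Finset.sum_mul_sq_le_sq_mul_sq Finset.univ
    (fun p : n × n => ‖A p.1 p.2‖) (fun p => ‖B p.1 p.2‖)
  have hnn : (0:ℝ) ≤ ∑ p : n × n, ‖A p.1 p.2‖ * ‖B p.1 p.2‖ :=
    Finset.sum_nonneg fun p _ => mul_nonneg (norm_nonneg _) (norm_nonneg _)
  rw [trace_conjTranspose_mul_re, trace_conjTranspose_mul_re,
    ← Real.sqrt_mul (by positivity), ← Real.sqrt_sq hnn]
  exact Real.sqrt_le_sqrt h2

end aux

/-- For a Hermitian matrix `S` and a PSD matrix `σ`,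
`‖σ^{1/2} S σ^{1/2}‖₁ ≤ √(tr(S²)·tr(σ²))`. -/
theorem traceNorm_sqrt_sandwich
    {n : Type*} [Fintype n] [DecidableEq n] [Nonempty n]
    (S σ : Matrix n n ℂ) (hS : S.IsHermitian) (hσ : σ.PosSemidef) :
    traceNorm (hσ.sqrt * S * hσ.sqrt)
      ≤ Real.sqrt (((S ^ 2).trace).re * ((σ ^ 2).trace).re) := by
  set r := hσ.sqrt with hrdef
  have hr : r.PosSemidef := hσ.posSemidef_sqrt
  have hrr : r * r = σ := hσ.sqrt_mul_self
  have hT : (r * S * r).IsHermitian := by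
    have := isHermitian_mul_mul_conjTranspose r hS
    rwa [hr.1.eq] at this
  set lam := hT.eigenvalues with hlam
  set V := (hT.eigenvectorUnitary : Matrix n n ℂ) with hVdef
  have hVV : V * Vᴴ = 1 := by
    rw [← Matrix.star_eq_conjTranspose]
    exact Matrix.mem_unitaryGroup_iff.mp hT.eigenvectorUnitary.2
  have hVV' : Vᴴ * V = 1 := by
    rw [← Matrix.star_eq_conjTranspose]
    exact Matrix.mem_unitaryGroup_iff'.mp hT.eigenvectorUnitary.2
  set ε : n → ℝ := fun i => if 0 ≤ lam i then 1 else -1 with hεdef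
  set Dε : Matrix n n ℂ := Matrix.diagonal (fun i => (ε i : ℂ)) with hDdef
  have key : ∀ D₁ D₂ : Matrix n n ℂ,
      (V * D₁ * Vᴴ) * (V * D₂ * Vᴴ) = V * (D₁ * D₂) * Vᴴ := by
    intro D₁ D₂
    simp only [mul_assoc]
    rw [← mul_assoc Vᴴ V (D₂ * Vᴴ), hVV', one_mul]
  set U : Matrix n n ℂ := V * Dε * Vᴴ with hUdef
  have hDD : Dε * Dε = 1 := by
    rw [hDdef, Matrix.diagonal_mul_diagonal]
    have h1 : (fun i => (ε i : ℂ) * ε i) = fun _ => (1:ℂ) := by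
      funext i; by_cases h : 0 ≤ lam i <;> simp [hεdef, h]
    rw [h1, Matrix.diagonal_one]
  have hUU : U * U = 1 := by
    rw [hUdef, key, hDD, mul_one, hVV]
  have hUH : Uᴴ = U := by
    rw [hUdef]
    simp only [Matrix.conjTranspose_mul, Matrix.conjTranspose_conjTranspose]
    rw [hDdef]
    simp only [Matrix.diagonal_conjTranspose]
    have h2 : star (fun i => (ε i : ℂ)) = fun i => (ε i : ℂ) := by
      funext i; simp [Complex.star_def, Complex.conj_ofReal]
    rw [h2]
    simp only [mul_assoc]
  have hspec := hT.spectral_theorem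
  rw [Unitary.conjStarAlgAut_apply] at hspec
  rw [Matrix.star_eq_conjTranspose] at hspec
  have htr1 : (U * (r * S * r)).trace = ((∑ i, |lam i| : ℝ) : ℂ) := by
    conv_lhs => rw [hspec]
    rw [hUdef, key, Matrix.trace_mul_cycle, ← mul_assoc, hVV', one_mul,
      hDdef, Matrix.diagonal_mul_diagonal, Matrix.trace_diagonal]
    push_cast
    refine Finset.sum_congr rfl fun i _ => ?_
    by_cases h : 0 ≤ lam i
    · simp [hεdef, h, abs_of_nonneg h]; rfl
    · simp [hεdef, h, abs_of_neg (lt_of_not_ge h)]; rfl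
  have hA : (r * U * r)ᴴ = r * U * r := by
    simp only [Matrix.conjTranspose_mul, hr.1.eq, hUH]
    simp only [mul_assoc]
  have hB : (U * σ * U)ᴴ = U * σ * U := by
    simp only [Matrix.conjTranspose_mul, hσ.1.eq, hUH]
    simp only [mul_assoc]
  have htr2 : (U * (r * S * r)).trace = ((r * U * r)ᴴ * S).trace := by
    rw [hA]
    rw [show U * (r * S * r) = (U * (r * S)) * r by noncomm_ring, Matrix.trace_mul_comm,
      show r * (U * (r * S)) = (r * U * r) * S by noncomm_ring]
  have htr3 : ((r * U * r)ᴴ * (r * U * r)).trace = ((U * σ * U)ᴴ * σ).trace := by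
    rw [hA, hB]
    calc ((r * U * r) * (r * U * r)).trace
        = ((r * (U * (r * r) * U)) * r).trace := by
          rw [show (r * U * r) * (r * U * r) = (r * (U * (r * r) * U)) * r by noncomm_ring]
      _ = ((r * (U * σ * U)) * r).trace := by rw [hrr]
      _ = ((r * r) * (U * σ * U)).trace := by
          rw [Matrix.trace_mul_comm,
            show r * (r * (U * σ * U)) = (r * r) * (U * σ * U) by noncomm_ring]
      _ = ((U * σ * U) * σ).trace := by rw [hrr, Matrix.trace_mul_comm]
  have htr4 : ((U * σ * U)ᴴ * (U * σ * U)).trace = (σ * σ).trace := by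
    rw [hB]
    calc ((U * σ * U) * (U * σ * U)).trace
        = ((U * (σ * (U * U) * σ)) * U).trace := by
          rw [show (U * σ * U) * (U * σ * U) = (U * (σ * (U * U) * σ)) * U by noncomm_ring]
      _ = ((U * (σ * 1 * σ)) * U).trace := by rw [hUU]
      _ = ((U * U) * (σ * σ)).trace := by
          rw [Matrix.trace_mul_comm,
            show U * (U * (σ * 1 * σ)) = (U * U) * (σ * σ) by noncomm_ring]
      _ = (σ * σ).trace := by rw [hUU, one_mul]
  have hσσ : 0 ≤ (σ * σ).trace.re := by
    have h := trace_conjTranspose_mul_re σ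
    rw [hσ.1.eq] at h
    rw [h]
    positivity
  have hbound : ((r * U * r)ᴴ * (r * U * r)).trace.re ≤ (σ * σ).trace.re := by
    rw [htr3]
    refine le_trans (Complex.re_le_norm _) ?_
    calc ‖((U * σ * U)ᴴ * σ).trace‖ = ‖((U * σ * U)ᴴ * σ).trace‖ := rfl
      _ ≤ Real.sqrt (((U * σ * U)ᴴ * (U * σ * U)).trace.re)
          * Real.sqrt ((σᴴ * σ).trace.re) := cs_trace _ _
      _ = (σ * σ).trace.re := by rw [htr4, hσ.1.eq, Real.mul_self_sqrt hσσ]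
  rw [traceNorm, dif_pos hT]
  have habs : ∑ i, |lam i| = ‖(U * (r * S * r)).trace‖ := by
    rw [htr1, Complex.norm_real, Real.norm_eq_abs,
      abs_of_nonneg (Finset.sum_nonneg fun i _ => abs_nonneg _)]
  calc ∑ i, |lam i|
      = ‖((r * U * r)ᴴ * S).trace‖ := by rw [habs, htr2]
    _ ≤ Real.sqrt (((r * U * r)ᴴ * (r * U * r)).trace.re)
        * Real.sqrt ((Sᴴ * S).trace.re) := cs_trace _ _
    _ ≤ Real.sqrt ((σ * σ).trace.re) * Real.sqrt ((Sᴴ * S).trace.re) :=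
        mul_le_mul_of_nonneg_right (Real.sqrt_le_sqrt hbound) (Real.sqrt_nonneg _)
    _ = Real.sqrt ((S ^ 2).trace.re * (σ ^ 2).trace.re) := by
        rw [hS.eq, pow_two, pow_two, ← Real.sqrt_mul hσσ, mul_comm]
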